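/- Let k be an integer with 0 ≤ k ≤ m-1, and define a = 2γ^(3k+1)/3, b = γ^(2m)/3, c = -γ^(2m+3k+1)/3, d = γ^m/3, e = -γ^(m+3k+1)/3, f = 1/3 in F_q. Then the map g : F_q → F_q given by g(x) = a·x^(3m-1) + b·x^(2m+1) + c·x^(2m-1) + d·x^(m+1) + e·x^(m-1) + f·x is a bijection of F_q, satisfies g(g(x)) = x for all x ∈ F_q, and the set {x ∈ F_q : g(x) = x} has exactly m+1 elements. -/

import Mathlib

theorem stmt18 (q m : ℕ) (F : Type*) [Field F] [Fintype F]
    (hq : Fintype.card F = q) (hodd : Odd q) (hq3 : q % 3 = 1)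
    (hm : m = (q - 1) / 3)
    (γ : Fˣ) (hγ : ∀ x : Fˣ, x ∈ Subgroup.zpowers γ)
    (k : ℕ) (hk : k ≤ m - 1)
    (a b c d e f : F)
    (ha : a = 2 * (γ : F)^(3*k+1) / 3)
    (hb : b = (γ : F)^(2*m) / 3)
    (hc : c = -(γ : F)^(2*m+3*k+1) / 3)
    (hd : d = (γ : F)^m / 3)
    (he : e = -(γ : F)^(m+3*k+1) / 3)
    (hf : f = 1 / 3)
    (g : F → F)
    (hg : ∀ x : F, g x = a * x^(3*m-1) + b * x^(2*m+1) + c * x^(2*m-1) + d * x^(m+1) + e * x^(m-1) + f * x) :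
    Function.Bijective g ∧ (∀ x : F, g (g x) = x) ∧
      {x : F | g x = x}.ncard = m + 1 := by
  classical
  -- basic numerology
  have hq1 : 1 < q := hq ▸ Fintype.one_lt_card
  have hq4 : q ≠ 4 := by rintro rfl; exact (by decide : ¬ Odd 4) hodd
  have hq7 : 7 ≤ q := by omega
  have hm2 : 2 ≤ m := by omega
  have h3m : q - 1 = 3 * m := by omega
  have hord : orderOf γ = q - 1 := by
    rw [orderOf_eq_card_of_forall_mem_zpowers hγ, Nat.card_eq_fintype_card,
      Fintype.card_units, hq]
  have hγq : (γ : F)^(q-1) = 1 := by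
    have h := pow_orderOf_eq_one γ
    rw [hord] at h
    rw [← Units.val_pow_eq_pow_val, h, Units.val_one]
  have hγ3m : (γ : F)^(3*m) = 1 := by rw [← h3m]; exact hγq
  obtain ⟨ω, hωdef⟩ : ∃ w : F, w = (γ : F)^m := ⟨_, rfl⟩
  obtain ⟨t, htdef⟩ : ∃ w : F, w = (γ : F)^(3*k+1) := ⟨_, rfl⟩
  have hωne : ω ≠ 0 := by rw [hωdef]; exact pow_ne_zero _ (Units.ne_zero γ)
  have htne : t ≠ 0 := by rw [htdef]; exact pow_ne_zero _ (Units.ne_zero γ)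
  have hω3 : ω^3 = 1 := by
    rw [hωdef, ← pow_mul, show m*3 = 3*m by ring]; exact hγ3m
  have hωne1 : ω ≠ 1 := by
    intro h
    have hu : (γ : Fˣ)^m = 1 := Units.ext (by rw [Units.val_pow_eq_pow_val, Units.val_one]; exact hωdef ▸ h)
    have := orderOf_dvd_of_pow_eq_one hu
    rw [hord] at this
    have := Nat.le_of_dvd (by omega) this
    omega
  have hωsum : ω^2 + ω + 1 = 0 := by
    have h : (ω - 1) * (ω^2 + ω + 1) = 0 := by linear_combination hω3
    rcases mul_eq_zero.mp h with h1 | h1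
    · exact absurd (sub_eq_zero.mp h1) hωne1
    · exact h1
  have three : (3 : F) ≠ 0 := by
    intro h3
    have h : (ω - 1)^3 = 0 := by linear_combination hω3 + (ω - ω^2) * h3
    exact hωne1 (sub_eq_zero.mp ((pow_eq_zero_iff (by norm_num)).mp h))
  have htm : t^m = ω := by
    rw [htdef, ← pow_mul, show (3*k+1)*m = 3*m*k + m by ring, pow_add, pow_mul, hγ3m,
      one_pow, one_mul, ← hωdef]
  -- rewritten coefficients
  have ha' : a = 2 * t / 3 := by rw [ha, ← htdef]
  have hb' : b = ω^2 / 3 := by rw [hb, hωdef, ← pow_mul, show m*2 = 2*m by ring]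
  have hc' : c = -(ω^2 * t) / 3 := by
    rw [hc, show 2*m+3*k+1 = 2*m + (3*k+1) by omega, pow_add, hωdef, htdef, ← pow_mul,
      show m*2 = 2*m by ring]
  have hd' : d = ω / 3 := by rw [hd, ← hωdef]
  have he' : e = -(ω * t) / 3 := by
    rw [he, show m+3*k+1 = m + (3*k+1) by omega, pow_add, hωdef, htdef]
  -- classification of x^m for x ≠ 0
  have hclass : ∀ x : F, x ≠ 0 → x^m = 1 ∨ x^m = ω ∨ x^m = ω^2 := by
    intro x hx
    have hu3 : (x^m)^3 = 1 := by
      rw [← pow_mul, show m*3 = q-1 by omega]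
      have h := FiniteField.pow_card_sub_one_eq_one x hx
      rwa [hq] at h
    set u := x^m with hu
    have h : (u - 1) * (u - ω) * (u - ω^2) = 0 := by
      linear_combination hu3 + (u - 1) * hω3 + (u - u^2) * hωsum
    rcases mul_eq_zero.mp h with h1 | h1
    · rcases mul_eq_zero.mp h1 with h2 | h2
      · exact Or.inl (sub_eq_zero.mp h2)
      · exact Or.inr (Or.inl (sub_eq_zero.mp h2))
    · exact Or.inr (Or.inr (sub_eq_zero.mp h1))
  -- the core identity
  have hgx : ∀ x : F, x ≠ 0 →
      x * g x = (a + c * (x^m)^2 + e * (x^m)) + (b * (x^m)^2 + d * (x^m) + f) * x^2 := by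
    intro x hx
    have hxq : x^(3*m) = 1 := by
      rw [← h3m]
      have h := FiniteField.pow_card_sub_one_eq_one x hx
      rwa [hq] at h
    have e1 : x ^ (3*m-1) * x = 1 := by
      rw [← pow_succ, show 3*m-1+1 = 3*m by omega]; exact hxq
    have e2 : x ^ (2*m+1) * x = (x^m)^2 * x^2 := by
      rw [show 2*m+1 = m*2+1 by ring, pow_succ, pow_mul]; ring
    have e3 : x ^ (2*m-1) * x = (x^m)^2 := by
      rw [← pow_succ, show 2*m-1+1 = m*2 by omega, pow_mul]
    have e4 : x ^ (m+1) * x = (x^m) * x^2 := by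
      rw [pow_succ]; ring
    have e5 : x ^ (m-1) * x = x^m := by
      rw [← pow_succ, show m-1+1 = m by omega]
    calc x * g x = a * (x^(3*m-1) * x) + b * (x^(2*m+1) * x) + c * (x^(2*m-1) * x)
        + d * (x^(m+1) * x) + e * (x^(m-1) * x) + f * x^2 := by rw [hg]; ring
      _ = _ := by rw [e1, e2, e3, e4, e5]; ring
  have hg0 : g 0 = 0 := by
    rw [hg, zero_pow (by omega : 3*m-1 ≠ 0), zero_pow (by omega : 2*m+1 ≠ 0),
      zero_pow (by omega : 2*m-1 ≠ 0), zero_pow (by omega : m+1 ≠ 0),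
      zero_pow (by omega : m-1 ≠ 0)]
    ring
  -- fixed class
  have hfix : ∀ x : F, x ≠ 0 → x^m = ω^2 → g x = x := by
    intro x hx hxm
    have h := hgx x hx
    rw [hxm] at h
    have hA : a + c * (ω^2)^2 + e * ω^2 = 0 := by
      rw [ha', hc', he']
      field_simp
      linear_combination (-(t*ω^3) - 2*t) * hω3
    have hB : b * (ω^2)^2 + d * ω^2 + f = 1 := by
      rw [hb', hd', hf]
      field_simp
      linear_combination (ω^3 + 2) * hω3
    rw [hA, hB] at h
    have h2 : x * g x = x * x := by rw [h]; ring
    exact mul_left_cancel₀ hx h2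
  -- swapped classes
  have hswap : ∀ x : F, x ≠ 0 → (x^m = 1 ∨ x^m = ω) → g x * x = t := by
    intro x hx hxm
    have h := hgx x hx
    rcases hxm with h1 | h1 <;> rw [h1] at h
    · have hA : a + c * (1:F)^2 + e * 1 = t := by
        rw [ha', hc', he']
        field_simp
        linear_combination -hωsum
      have hB : b * (1:F)^2 + d * 1 + f = 0 := by
        rw [hb', hd', hf]
        field_simp
        linear_combination hωsum
      rw [hA, hB] at h
      rw [mul_comm]
      rw [h]; ring
    · have hA : a + c * ω^2 + e * ω = t := by
        rw [ha', hc', he']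
        field_simp
        linear_combination -hωsum - ω * hω3
      have hB : b * ω^2 + d * ω + f = 0 := by
        rw [hb', hd', hf]
        field_simp
        linear_combination hωsum + ω * hω3
      rw [hA, hB] at h
      rw [mul_comm, h]; ring
  -- involution
  have hinv : ∀ x : F, g (g x) = x := by
    intro x
    by_cases hx : x = 0
    · rw [hx, hg0, hg0]
    rcases hclass x hx with h | h | h
    · have h1 := hswap x hx (Or.inl h)
      have hgne : g x ≠ 0 := by
        intro h0; rw [h0, zero_mul] at h1; exact htne h1.symm
      have hgm : (g x)^m = ω := by
        have h2 : (g x)^m * x^m = t^m := by rw [← mul_pow, h1]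
        rwa [h, htm, mul_one] at h2
      have h2 := hswap (g x) hgne (Or.inr hgm)
      have : g (g x) * g x = x * g x := by rw [h2, ← h1]; ring
      exact mul_right_cancel₀ hgne this
    · have h1 := hswap x hx (Or.inr h)
      have hgne : g x ≠ 0 := by
        intro h0; rw [h0, zero_mul] at h1; exact htne h1.symm
      have hgm : (g x)^m = 1 := by
        have h2 : (g x)^m * x^m = t^m := by rw [← mul_pow, h1]
        rw [h, htm] at h2
        exact mul_right_cancel₀ hωne (by rw [h2, one_mul])
      have h2 := hswap (g x) hgne (Or.inl hgm)
      have : g (g x) * g x = x * g x := by rw [h2, ← h1]; ring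
      exact mul_right_cancel₀ hgne this
    · have h1 := hfix x hx h
      rw [h1, h1]
  have hbij : Function.Bijective g := Function.Involutive.bijective hinv
  refine ⟨hbij, hinv, ?_⟩
  -- fixed point set
  have hset : {x : F | g x = x} = insert (0:F) {x : F | x^m = ω^2} := by
    ext x
    simp only [Set.mem_setOf_eq, Set.mem_insert_iff]
    constructor
    · intro hgxx
      by_cases hx : x = 0
      · exact Or.inl hx
      right
      rcases hclass x hx with h | h | h
      · exfalso
        have h1 := hswap x hx (Or.inl h)
        rw [hgxx] at h1
        have h2 : (x^m)^2 = t^m := by rw [← pow_mul, show m*2 = 2*m by ring,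
          pow_mul, show x^2 = t by rw [← h1]; ring]
        rw [h, htm, one_pow] at h2
        exact hωne1 h2.symm
      · exfalso
        have h1 := hswap x hx (Or.inr h)
        rw [hgxx] at h1
        have h2 : (x^m)^2 = t^m := by rw [← pow_mul, show m*2 = 2*m by ring,
          pow_mul, show x^2 = t by rw [← h1]; ring]
        rw [h, htm] at h2
        exact hωne1 (mul_left_cancel₀ hωne (by linear_combination h2))
      · exact h
    · rintro (rfl | h)
      · exact hg0
      · have hx : x ≠ 0 := by
          intro h0
          rw [h0, zero_pow (by omega : m ≠ 0)] at h
          exact (pow_ne_zero 2 hωne) h.symm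
        exact hfix x hx h
  rw [hset]
  have h0S : (0:F) ∉ {x : F | x^m = ω^2} := by
    simp only [Set.mem_setOf_eq, zero_pow (by omega : m ≠ 0)]
    exact fun h => (pow_ne_zero 2 hωne) h.symm
  rw [Set.ncard_insert_of_notMem h0S (Set.toFinite _)]
  have hcount : {x : F | x^m = ω^2}.ncard = m := by
    refine le_antisymm ?_ ?_
    · -- at most m roots of X^m - ω²
      have hsub : {x : F | x^m = ω^2} ⊆
          ↑(Polynomial.nthRoots m (ω^2)).toFinset := by
        intro x hx
        simp only [Finset.coe_sort_coe, Multiset.mem_toFinset, Finset.mem_coe]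
        rw [Polynomial.mem_nthRoots (by omega : 0 < m)]
        exact hx
      calc {x : F | x^m = ω^2}.ncard
          ≤ ((Polynomial.nthRoots m (ω^2)).toFinset : Set F).ncard :=
            Set.ncard_le_ncard hsub (Set.toFinite _)
        _ = (Polynomial.nthRoots m (ω^2)).toFinset.card := Set.ncard_coe_finset _
        _ ≤ Multiset.card (Polynomial.nthRoots m (ω^2)) := Multiset.toFinset_card_le _
        _ ≤ m := Polynomial.card_nthRoots m (ω^2)
    · -- at least m: the elements γ^(3i+2), i < m
      set T : Finset F := (Finset.range m).image (fun i => (γ:F)^(3*i+2)) with hT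
      have hinj : Set.InjOn (fun i => (γ:F)^(3*i+2)) ↑(Finset.range m) := by
        intro i hi j hj hij
        simp only [Finset.coe_range, Set.mem_Iio] at hi hj
        have hu : (γ : Fˣ)^(3*i+2) = γ^(3*j+2) := Units.ext (by push_cast; exact hij)
        have := pow_injOn_Iio_orderOf (x := γ)
          (by rw [Set.mem_Iio, hord]; omega) (by rw [Set.mem_Iio, hord]; omega) hu
        omega
      have hTcard : T.card = m := by
        rw [hT, Finset.card_image_of_injOn hinj, Finset.card_range]
      have hTsub : ↑T ⊆ {x : F | x^m = ω^2} := by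
        intro x hx
        simp only [hT, Finset.coe_image, Set.mem_image, Finset.coe_range, Set.mem_Iio] at hx
        obtain ⟨i, _, rfl⟩ := hx
        simp only [Set.mem_setOf_eq]
        rw [← pow_mul, show (3*i+2)*m = 3*m*i + m*2 by ring, pow_add, pow_mul, hγ3m,
          one_pow, one_mul, pow_mul, ← hωdef]
      calc m = T.card := hTcard.symm
        _ = (↑T : Set F).ncard := (Set.ncard_coe_finset _).symm
        _ ≤ {x : F | x^m = ω^2}.ncard := Set.ncard_le_ncard hTsub (Set.toFinite _)
  rw [hcount]
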